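/- Let E be a real inner product space (e.g. EuclideanSpace ℝ (Fin m)), let F : E → ℝ be differentiable with gradient ∇F that is L-Lipschitz for some L > 0, and suppose F(w) ≥ L_inf for all w ∈ E. On a probability space with a filtration (𝔽_t)_{t∈ℕ}, let (w_t) be an adapted sequence with w_0 deterministic, and let (g_t) be a sequence of square-integrable random vectors with g_t measurable with respect to 𝔽_{t+1}, satisfying almost surely: w_{t+1} = w_t − η g_t, E[g_t ∣ 𝔽_t] = ∇F(w_t), and E[‖g_t − ∇F(w_t)‖² ∣ 𝔽_t] ≤ σ², where 0 < η ≤ 1/L and σ ≥ 0. Then for every integer T ≥ 1: (1/T) Σ_{t=0}^{T−1} E[‖∇F(w_t)‖²] ≤ 2(F(w_0) − L_inf)/(η T) + η L σ². -/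

import Mathlib

open MeasureTheory InnerProductSpace

section Descent
variable {E : Type*} [NormedAddCommGroup E] [InnerProductSpace ℝ E] [CompleteSpace E]

lemma sgd_descent (F : E → ℝ) (F' : E → E) (L : ℝ)
    (hgrad : ∀ x, HasGradientAt F (F' x) x)
    (hlip : ∀ x y, ‖F' x - F' y‖ ≤ L * ‖x - y‖) (x v : E) :
    F (x + v) ≤ F x + inner ℝ (F' x) v + L / 2 * ‖v‖ ^ 2 := by
  set c : ℝ := L / 2 * ‖v‖ ^ 2 with hc
  set φ : ℝ → ℝ := fun s => F (x + s • v) - s * inner ℝ (F' x) v - s ^ 2 * c with hφdef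
  have hφ : ∀ s : ℝ, HasDerivAt φ
      ((inner ℝ (F' (x + s • v)) v : ℝ) - inner ℝ (F' x) v - (2 * s ^ 1) * c) s := by
    intro s
    have hline : HasDerivAt (fun s : ℝ => x + s • v) v s := by
      simpa using ((hasDerivAt_id s).smul_const v).const_add x
    have hF : HasDerivAt (fun s : ℝ => F (x + s • v)) ((inner ℝ (F' (x + s • v)) v : ℝ)) s := by
      have := ((hgrad (x + s • v)).hasFDerivAt.comp_hasDerivAt s hline)
      simp only [toDual_apply_apply] at this
      exact this
    exact (hF.sub ((hasDerivAt_mul_const (inner ℝ (F' x) v : ℝ)))).sub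
      ((hasDerivAt_pow 2 s).mul_const c)
  have hanti : AntitoneOn φ (Set.Icc (0:ℝ) 1) := by
    refine antitoneOn_of_deriv_nonpos (convex_Icc 0 1)
      (fun s _ => (hφ s).continuousAt.continuousWithinAt)
      (fun s _ => ((hφ s).differentiableAt).differentiableWithinAt) ?_
    intro s hs
    rw [interior_Icc] at hs
    rw [(hφ s).deriv]
    have h1 : (inner ℝ (F' (x + s • v)) v : ℝ) - inner ℝ (F' x) v
        = inner ℝ (F' (x + s • v) - F' x) v := by rw [inner_sub_left]
    rw [h1]
    have h2 : (inner ℝ (F' (x + s • v) - F' x) v : ℝ) ≤ L * s * ‖v‖ ^ 2 := by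
      calc (inner ℝ (F' (x + s • v) - F' x) v : ℝ) ≤ ‖F' (x + s • v) - F' x‖ * ‖v‖ :=
            real_inner_le_norm _ _
        _ ≤ (L * ‖(x + s • v) - x‖) * ‖v‖ :=
            mul_le_mul_of_nonneg_right (hlip _ _) (norm_nonneg v)
        _ = L * s * ‖v‖ ^ 2 := by
            rw [add_sub_cancel_left, norm_smul, Real.norm_eq_abs, abs_of_pos hs.1]; ring
    have h3 : (2 * s ^ 1) * c = L * s * ‖v‖ ^ 2 := by rw [hc]; ring
    linarith
  have h01 := hanti (Set.left_mem_Icc.2 zero_le_one) (Set.right_mem_Icc.2 zero_le_one) zero_le_one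
  simp only [hφdef, zero_smul, add_zero, zero_mul, one_smul, one_mul, one_pow,
    zero_pow, sub_zero] at h01
  linarith [h01]

end Descent

section Cond
variable {Ω : Type*} {m mΩ : MeasurableSpace Ω} {μ : Measure Ω} [IsFiniteMeasure μ]
  {E : Type*} [NormedAddCommGroup E] [InnerProductSpace ℝ E]
  [CompleteSpace E]

lemma sgd_condexpL2_ae_eq_condexp (hm : m ≤ mΩ) {g : Ω → E} (hg2 : MemLp g 2 μ) :
    (condExpL2 E ℝ hm (hg2.toLp g) : Ω →₂[μ] E) =ᵐ[μ] μ[g|m] := by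
  refine ae_eq_condExp_of_forall_setIntegral_eq hm (hg2.integrable (by norm_num))
    (fun s _ hμs => integrableOn_Lp_of_measure_ne_top _ (by norm_num) hμs.ne)
    (fun s hs hμs => ?_) (aestronglyMeasurable_condExpL2 hm _)
  rw [integral_condExpL2_eq hm (hg2.toLp g) hs hμs.ne]
  exact setIntegral_congr_ae (hm s hs) ((hg2.coeFn_toLp).mono fun x hx _ => hx)

lemma sgd_memℒp_condexp (hm : m ≤ mΩ) {g : Ω → E} (hg2 : MemLp g 2 μ) :
    MemLp (μ[g|m]) 2 μ :=
  (Lp.memLp _).ae_eq (sgd_condexpL2_ae_eq_condexp hm hg2)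

omit [IsFiniteMeasure μ] [CompleteSpace E] in
lemma sgd_integrable_inner {f g : Ω → E} (hf : MemLp f 2 μ) (hg : MemLp g 2 μ) :
    Integrable (fun ω => (inner ℝ (f ω) (g ω) : ℝ)) μ := by
  refine (L2.integrable_inner (𝕜 := ℝ) (hf.toLp f) (hg.toLp g)).congr ?_
  filter_upwards [hf.coeFn_toLp, hg.coeFn_toLp] with ω h1 h2
  rw [h1, h2]

lemma sgd_integral_inner_condexp (hm : m ≤ mΩ) {h g : Ω → E}
    (hhm : StronglyMeasurable[m] h) (hh2 : MemLp h 2 μ) (hg2 : MemLp g 2 μ) :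
    ∫ ω, (inner ℝ (h ω) (g ω) : ℝ) ∂μ = ∫ ω, (inner ℝ (h ω) ((μ[g|m]) ω) : ℝ) ∂μ := by
  have hH' : AEStronglyMeasurable[m] (hh2.toLp h) μ :=
    AEStronglyMeasurable.congr hhm.aestronglyMeasurable (hh2.coeFn_toLp).symm
  have key := inner_condExpL2_eq_inner_fun (𝕜 := ℝ) hm (hg2.toLp g) (hh2.toLp h) hH'
  rw [L2.inner_def, L2.inner_def] at key
  calc ∫ ω, (inner ℝ (h ω) (g ω) : ℝ) ∂μ
      = ∫ ω, (inner ℝ ((hg2.toLp g) ω) ((hh2.toLp h) ω) : ℝ) ∂μ := by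
        refine integral_congr_ae ?_
        filter_upwards [hg2.coeFn_toLp, hh2.coeFn_toLp] with ω h1 h2
        rw [h1, h2, real_inner_comm]
    _ = ∫ ω, (inner ℝ ((condExpL2 E ℝ hm (hg2.toLp g) : Ω →₂[μ] E) ω) ((hh2.toLp h) ω) : ℝ) ∂μ :=
        key.symm
    _ = ∫ ω, (inner ℝ (h ω) ((μ[g|m]) ω) : ℝ) ∂μ := by
        refine integral_congr_ae ?_
        filter_upwards [sgd_condexpL2_ae_eq_condexp hm hg2, hh2.coeFn_toLp] with ω h1 h2
        rw [h1, h2, real_inner_comm]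

end Cond

/-- Convergence of constant-stepsize SGD to approximate stationary points for an
`L`-smooth, lower-bounded objective under unbiased stochastic gradients with
uniformly bounded conditional variance. -/
theorem stmt_1
    {E : Type*} [NormedAddCommGroup E] [InnerProductSpace ℝ E] [CompleteSpace E]
    {Ω : Type*} {mΩ : MeasurableSpace Ω} {μ : Measure Ω} [IsProbabilityMeasure μ]
    (𝔽 : Filtration ℕ mΩ)
    (F : E → ℝ) (F' : E → E) (L Linf η σ : ℝ)
    (hL : 0 < L)
    (hgrad : ∀ x, HasGradientAt F (F' x) x)
    (hlip : ∀ x y, ‖F' x - F' y‖ ≤ L * ‖x - y‖)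
    (hlb : ∀ x, Linf ≤ F x)
    (w : ℕ → Ω → E) (g : ℕ → Ω → E) (w0 : E)
    (hadapted : StronglyAdapted 𝔽 w)
    (hw0 : w 0 = fun _ => w0)
    (hgmeas : ∀ t, StronglyMeasurable[𝔽 (t + 1)] (g t))
    (hgL2 : ∀ t, MemLp (g t) 2 μ)
    (hupdate : ∀ t, ∀ᵐ ω ∂μ, w (t + 1) ω = w t ω - η • g t ω)
    (hunbiased : ∀ t, μ[g t | 𝔽 t] =ᵐ[μ] fun ω => F' (w t ω))
    (hvar : ∀ t, ∀ᵐ ω ∂μ,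
      (μ[fun ω' => ‖g t ω' - F' (w t ω')‖ ^ 2 | 𝔽 t]) ω ≤ σ ^ 2)
    (hη : 0 < η) (hηL : η ≤ 1 / L) (hσ : 0 ≤ σ) :
    ∀ T : ℕ, 1 ≤ T →
      (1 / (T : ℝ)) * ∑ t ∈ Finset.range T, ∫ ω, ‖F' (w t ω)‖ ^ 2 ∂μ
        ≤ 2 * (F w0 - Linf) / (η * T) + η * L * σ ^ 2 := by
  have hFdiff : Differentiable ℝ F := fun x => ((hgrad x).hasFDerivAt).differentiableAt
  have hFcont : Continuous F := hFdiff.continuous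
  have hF'cont : Continuous F' := by
    refine (LipschitzWith.of_dist_le_mul (K := ⟨L, hL.le⟩) fun x y => ?_).continuous
    rw [dist_eq_norm, dist_eq_norm]
    exact hlip x y
  have hm : ∀ t, 𝔽 t ≤ mΩ := fun t => 𝔽.le t
  have hwm : ∀ t, AEStronglyMeasurable (w t) μ := fun t =>
    ((hadapted t).mono (hm t)).aestronglyMeasurable
  have hFw'meas : ∀ t, StronglyMeasurable[𝔽 t] (fun ω => F' (w t ω)) := fun t =>
    hF'cont.comp_stronglyMeasurable (hadapted t)
  have hFw2 : ∀ t, MemLp (fun ω => F' (w t ω)) 2 μ := fun t =>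
    (sgd_memℒp_condexp (hm t) (hgL2 t)).ae_eq (hunbiased t)
  have hIint : ∀ t, Integrable (fun ω => ‖F' (w t ω)‖ ^ 2) μ := fun t =>
    ((hFw2 t).norm).integrable_sq
  have hgsqint : ∀ t, Integrable (fun ω => ‖g t ω‖ ^ 2) μ := fun t =>
    ((hgL2 t).norm).integrable_sq
  have hinner : ∀ t, Integrable (fun ω => (inner ℝ (F' (w t ω)) (g t ω) : ℝ)) μ := fun t =>
    sgd_integrable_inner (hFw2 t) (hgL2 t)
  have hInn : ∀ t, (0:ℝ) ≤ ∫ ω, ‖F' (w t ω)‖ ^ 2 ∂μ := fun t =>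
    integral_nonneg fun ω => sq_nonneg _
  have hIg : ∀ t, ∫ ω, (inner ℝ (F' (w t ω)) (g t ω) : ℝ) ∂μ = ∫ ω, ‖F' (w t ω)‖ ^ 2 ∂μ := by
    intro t
    rw [sgd_integral_inner_condexp (hm t) (hFw'meas t) (hFw2 t) (hgL2 t)]
    refine integral_congr_ae ((hunbiased t).mono fun ω hω => ?_)
    have hω' : (μ[g t|𝔽 t]) ω = F' (w t ω) := hω
    show (inner ℝ (F' (w t ω)) ((μ[g t|𝔽 t]) ω) : ℝ) = ‖F' (w t ω)‖ ^ 2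
    rw [hω', real_inner_self_eq_norm_sq]
  have hdint : ∀ t, Integrable (fun ω => ‖g t ω - F' (w t ω)‖ ^ 2) μ := fun t =>
    (((hgL2 t).sub (hFw2 t)).norm).integrable_sq
  have hV : ∀ t, ∫ ω, ‖g t ω - F' (w t ω)‖ ^ 2 ∂μ ≤ σ ^ 2 := by
    intro t
    rw [← integral_condExp (hm t) (f := fun ω => ‖g t ω - F' (w t ω)‖ ^ 2)]
    calc ∫ ω, (μ[fun ω' => ‖g t ω' - F' (w t ω')‖ ^ 2|𝔽 t]) ω ∂μ
        ≤ ∫ _ω, σ ^ 2 ∂μ := integral_mono_ae integrable_condExp (integrable_const _) (hvar t)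
      _ = σ ^ 2 := by simp
  have hgsq : ∀ t, ∫ ω, ‖g t ω‖ ^ 2 ∂μ ≤ σ ^ 2 + ∫ ω, ‖F' (w t ω)‖ ^ 2 ∂μ := by
    intro t
    have hpt : ∀ ω, ‖g t ω‖ ^ 2 = ‖g t ω - F' (w t ω)‖ ^ 2
        + 2 * (inner ℝ (F' (w t ω)) (g t ω) : ℝ) - ‖F' (w t ω)‖ ^ 2 := by
      intro ω
      have h1 := norm_sub_sq_real (g t ω) (F' (w t ω))
      have h2 := real_inner_comm (g t ω) (F' (w t ω))
      linarith
    calc ∫ ω, ‖g t ω‖ ^ 2 ∂μ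
        = ∫ ω, (‖g t ω - F' (w t ω)‖ ^ 2 + 2 * (inner ℝ (F' (w t ω)) (g t ω) : ℝ)
            - ‖F' (w t ω)‖ ^ 2) ∂μ := integral_congr_ae (Filter.Eventually.of_forall hpt)
      _ = ∫ ω, ‖g t ω - F' (w t ω)‖ ^ 2 ∂μ
            + 2 * ∫ ω, (inner ℝ (F' (w t ω)) (g t ω) : ℝ) ∂μ - ∫ ω, ‖F' (w t ω)‖ ^ 2 ∂μ := by
          have hab : Integrable (fun ω => ‖g t ω - F' (w t ω)‖ ^ 2
              + 2 * (inner ℝ (F' (w t ω)) (g t ω) : ℝ)) μ :=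
            (hdint t).add ((hinner t).const_mul 2)
          rw [integral_sub hab (hIint t),
            integral_add (hdint t) ((hinner t).const_mul 2), integral_const_mul]
      _ ≤ σ ^ 2 + ∫ ω, ‖F' (w t ω)‖ ^ 2 ∂μ := by
          rw [hIg t]; linarith [hV t]
  have hFwm : ∀ t, AEStronglyMeasurable (fun ω => F (w t ω)) μ := fun t =>
    hFcont.comp_aestronglyMeasurable (hwm t)
  have hηL2 : η * L ≤ 1 := by
    rw [le_div_iff₀ hL] at hηL; exact hηL
  have hstep : ∀ t, Integrable (fun ω => F (w t ω)) μ →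
      Integrable (fun ω => F (w (t+1) ω)) μ ∧
      ∫ ω, F (w (t+1) ω) ∂μ ≤ ∫ ω, F (w t ω) ∂μ
        - η/2 * ∫ ω, ‖F' (w t ω)‖ ^ 2 ∂μ + η^2*L*σ^2/2 := by
    intro t hAint
    have hBint : Integrable (fun ω => F (w t ω) - η * (inner ℝ (F' (w t ω)) (g t ω) : ℝ)
        + η^2*L/2 * ‖g t ω‖^2) μ :=
      (hAint.sub ((hinner t).const_mul η)).add ((hgsqint t).const_mul (η^2*L/2))
    have hle : ∀ᵐ ω ∂μ, F (w (t+1) ω) ≤ F (w t ω) - η * (inner ℝ (F' (w t ω)) (g t ω) : ℝ)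
        + η^2*L/2 * ‖g t ω‖^2 := by
      filter_upwards [hupdate t] with ω hω
      rw [hω, sub_eq_add_neg]
      refine (sgd_descent F F' L hgrad hlip (w t ω) (-(η • g t ω))).trans_eq ?_
      rw [inner_neg_right, real_inner_smul_right, norm_neg, norm_smul, Real.norm_eq_abs,
        abs_of_pos hη, mul_pow]
      ring
    have hFnint : Integrable (fun ω => F (w (t+1) ω)) μ := by
      refine Integrable.mono' (hBint.abs.add (integrable_const |Linf|)) (hFwm (t+1)) ?_
      filter_upwards [hle] with ω hω
      rw [Real.norm_eq_abs, abs_le]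
      have hlbω := hlb (w (t+1) ω)
      constructor
      · have := neg_abs_le Linf
        have := abs_nonneg (F (w t ω) - η * (inner ℝ (F' (w t ω)) (g t ω) : ℝ)
          + η^2*L/2 * ‖g t ω‖^2)
        simp only [Pi.add_apply, Pi.abs_apply]
        linarith
      · have := le_abs_self (F (w t ω) - η * (inner ℝ (F' (w t ω)) (g t ω) : ℝ)
          + η^2*L/2 * ‖g t ω‖^2)
        have := abs_nonneg Linf
        simp only [Pi.add_apply, Pi.abs_apply]
        linarith
    refine ⟨hFnint, ?_⟩
    have h1 : ∫ ω, F (w (t+1) ω) ∂μ ≤ ∫ ω, (F (w t ω)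
        - η * (inner ℝ (F' (w t ω)) (g t ω) : ℝ) + η^2*L/2 * ‖g t ω‖^2) ∂μ :=
      integral_mono_ae hFnint hBint hle
    have h2 : ∫ ω, (F (w t ω) - η * (inner ℝ (F' (w t ω)) (g t ω) : ℝ)
        + η^2*L/2 * ‖g t ω‖^2) ∂μ
        = ∫ ω, F (w t ω) ∂μ - η * ∫ ω, ‖F' (w t ω)‖ ^ 2 ∂μ
          + η^2*L/2 * ∫ ω, ‖g t ω‖^2 ∂μ := by
      have hab : Integrable (fun ω => F (w t ω)
          - η * (inner ℝ (F' (w t ω)) (g t ω) : ℝ)) μ :=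
        hAint.sub ((hinner t).const_mul η)
      rw [integral_add hab ((hgsqint t).const_mul (η^2*L/2)),
        integral_sub hAint ((hinner t).const_mul η), integral_const_mul, integral_const_mul,
        hIg t]
    have h3 : η^2*L/2 * ∫ ω, ‖g t ω‖^2 ∂μ
        ≤ η^2*L/2 * (σ^2 + ∫ ω, ‖F' (w t ω)‖ ^ 2 ∂μ) :=
      mul_le_mul_of_nonneg_left (hgsq t) (by positivity)
    have h4 : η^2*L/2 * ∫ ω, ‖F' (w t ω)‖ ^ 2 ∂μ ≤ η/2 * ∫ ω, ‖F' (w t ω)‖ ^ 2 ∂μ := by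
      refine mul_le_mul_of_nonneg_right ?_ (hInn t)
      nlinarith
    nlinarith
  have hAint : ∀ t, Integrable (fun ω => F (w t ω)) μ := by
    intro t
    induction t with
    | zero => simp only [hw0]; exact integrable_const (F w0)
    | succ t ih => exact (hstep t ih).1
  have hsum : ∀ T : ℕ, ∫ ω, F (w T ω) ∂μ
      + η/2 * ∑ t ∈ Finset.range T, ∫ ω, ‖F' (w t ω)‖ ^ 2 ∂μ
      ≤ F w0 + T * (η^2*L*σ^2/2) := by
    intro T
    induction T with
    | zero => simp [hw0]
    | succ T ih =>
      have h := (hstep T (hAint T)).2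
      rw [Finset.sum_range_succ]
      push_cast
      linarith
  intro T hT
  have hTpos : (0:ℝ) < T := by exact_mod_cast hT
  have hlow : Linf ≤ ∫ ω, F (w T ω) ∂μ := by
    calc Linf = ∫ _ω, Linf ∂μ := by simp
      _ ≤ _ := integral_mono (integrable_const _) (hAint T) fun ω => hlb _
  have h5 : η/2 * ∑ t ∈ Finset.range T, ∫ ω, ‖F' (w t ω)‖ ^ 2 ∂μ
      ≤ F w0 - Linf + T * (η^2*L*σ^2/2) := by linarith [hsum T]
  have hkey : ∑ t ∈ Finset.range T, ∫ ω, ‖F' (w t ω)‖ ^ 2 ∂μ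
      ≤ 2*(F w0 - Linf)/η + T*(η*L*σ^2) := by
    have h6 : ∑ t ∈ Finset.range T, ∫ ω, ‖F' (w t ω)‖ ^ 2 ∂μ
        = 2/η * (η/2 * ∑ t ∈ Finset.range T, ∫ ω, ‖F' (w t ω)‖ ^ 2 ∂μ) := by
      field_simp
    rw [h6]
    calc 2/η * (η/2 * ∑ t ∈ Finset.range T, ∫ ω, ‖F' (w t ω)‖ ^ 2 ∂μ)
        ≤ 2/η * (F w0 - Linf + T * (η^2*L*σ^2/2)) :=
          mul_le_mul_of_nonneg_left h5 (by positivity)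
      _ = 2*(F w0 - Linf)/η + T*(η*L*σ^2) := by field_simp
  calc (1 / (T : ℝ)) * ∑ t ∈ Finset.range T, ∫ ω, ‖F' (w t ω)‖ ^ 2 ∂μ
      ≤ (1 / (T : ℝ)) * (2*(F w0 - Linf)/η + T*(η*L*σ^2)) :=
        mul_le_mul_of_nonneg_left hkey (by positivity)
    _ = 2 * (F w0 - Linf) / (η * T) + η * L * σ ^ 2 := by field_simp
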